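/- Let f : ℝ^d → ℝ be differentiable with L-Lipschitz gradient, let λ > 0, η > 0, and let θ, c ∈ ℝ^d with ‖θ‖_∞ ≤ 1/λ. Set θ⁺ = θ − η(sign(c) + λθ), where sign acts componentwise with sign(0) = 0. Then f(θ⁺) − f(θ) ≤ −ηλ⟨∇f(θ), θ⟩ − η‖∇f(θ)‖₁ + 2η‖c − ∇f(θ)‖₁ + 2dLη², and hence also f(θ⁺) − f(θ) ≤ −ηλ⟨∇f(θ), θ⟩ − η‖∇f(θ)‖₁ + 2η√d‖c − ∇f(θ)‖₂ + 2dLη². -/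

import Mathlib

open MeasureTheory Real Finset

local notation "⟪" x ", " y "⟫" => @inner ℝ _ _ x y

/-- componentwise sign map, with sign 0 = 0. -/
noncomputable def signVec {d : ℕ} (x : EuclideanSpace ℝ (Fin d)) : EuclideanSpace ℝ (Fin d) :=
  (EuclideanSpace.equiv (Fin d) ℝ).symm fun i => Real.sign (x i)

/-- the ℓ∞ norm on ℝ^d. -/
noncomputable def linfNorm {d : ℕ} (x : EuclideanSpace ℝ (Fin d)) : ℝ :=
  ‖EuclideanSpace.equiv (Fin d) ℝ x‖

/-- the ℓ1 norm on ℝ^d. -/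
noncomputable def l1Norm {d : ℕ} (x : EuclideanSpace ℝ (Fin d)) : ℝ :=
  ∑ i, |x i|


lemma signVec_apply {d : ℕ} (x : EuclideanSpace ℝ (Fin d)) (i : Fin d) :
    signVec x i = Real.sign (x i) := rfl

lemma fderiv_eq_inner_gradient {d : ℕ} (f : EuclideanSpace ℝ (Fin d) → ℝ) (x v : EuclideanSpace ℝ (Fin d)) :
    fderiv ℝ f x v = ⟪gradient f x, v⟫ := by
  rw [gradient]
  rw [← InnerProductSpace.toDual_apply_apply, LinearIsometryEquiv.apply_symm_apply]

lemma descent_lemma {d : ℕ} (f : EuclideanSpace ℝ (Fin d) → ℝ) (L : ℝ)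
    (hf : Differentiable ℝ f)
    (hL : ∀ x y, ‖gradient f x - gradient f y‖ ≤ L * ‖x - y‖)
    (x v : EuclideanSpace ℝ (Fin d)) :
    f (x + v) ≤ f x + ⟪gradient f x, v⟫ + L / 2 * ‖v‖ ^ 2 := by
  set g : ℝ → ℝ := fun t => f (x + t • v) - t * ⟪gradient f x, v⟫ - L / 2 * t ^ 2 * ‖v‖ ^ 2 with hg
  have hderiv : ∀ t : ℝ, HasDerivAt g
      (⟪gradient f (x + t • v), v⟫ - ⟪gradient f x, v⟫ - L / 2 * (2 * t) * ‖v‖ ^ 2) t := by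
    intro t
    have hc : HasDerivAt (fun t : ℝ => x + t • v) v t := by
      simpa using ((hasDerivAt_id t).smul_const v).const_add x
    have h1 : HasDerivAt (fun t : ℝ => f (x + t • v)) (fderiv ℝ f (x + t • v) v) t :=
      (hf (x + t • v)).hasFDerivAt.comp_hasDerivAt t hc
    rw [fderiv_eq_inner_gradient] at h1
    have h2 : HasDerivAt (fun t : ℝ => t * ⟪gradient f x, v⟫) ⟪gradient f x, v⟫ t := by
      simpa using (hasDerivAt_id t).mul_const ⟪gradient f x, v⟫
    have h3 : HasDerivAt (fun t : ℝ => L / 2 * t ^ 2 * ‖v‖ ^ 2)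
        (L / 2 * (2 * t) * ‖v‖ ^ 2) t := by
      have := ((hasDerivAt_pow 2 t).const_mul (L / 2)).mul_const (‖v‖ ^ 2)
      simpa [mul_comm, mul_assoc, mul_left_comm] using this
    exact (h1.sub h2).sub h3
  have key : g 1 ≤ g 0 := by
    have hanti : AntitoneOn g (Set.Icc 0 1) := by
      apply antitoneOn_of_deriv_nonpos (convex_Icc 0 1)
      · exact (Differentiable.continuous (fun t => (hderiv t).differentiableAt)).continuousOn
      · intro t ht
        exact ((hderiv t).differentiableAt).differentiableWithinAt
      · intro t ht
        rw [interior_Icc] at ht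
        rw [(hderiv t).deriv]
        have hb : ⟪gradient f (x + t • v), v⟫ - ⟪gradient f x, v⟫ ≤ L * t * ‖v‖ ^ 2 := by
          rw [← inner_sub_left]
          calc ⟪gradient f (x + t • v) - gradient f x, v⟫
              ≤ ‖gradient f (x + t • v) - gradient f x‖ * ‖v‖ := real_inner_le_norm _ _
            _ ≤ (L * ‖(x + t • v) - x‖) * ‖v‖ :=
                mul_le_mul_of_nonneg_right (hL _ _) (norm_nonneg v)
            _ = L * t * ‖v‖ ^ 2 := by
                rw [add_sub_cancel_left, norm_smul, Real.norm_eq_abs,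
                  abs_of_nonneg ht.1.le]
                ring
        nlinarith [hb]
    exact hanti (by norm_num) (by norm_num) zero_le_one
  simp only [hg, one_smul, zero_smul, add_zero, one_pow] at key
  nlinarith [key]

lemma sign_pointwise (c g : ℝ) : |g| - g * Real.sign c ≤ 2 * |c - g| := by
  rcases lt_trichotomy c 0 with h | h | h
  · rw [Real.sign_of_neg h]
    rcases abs_cases g with ⟨hg, _⟩ | ⟨hg, _⟩ <;> rcases abs_cases (c - g) with ⟨h2, _⟩ | ⟨h2, _⟩ <;>
      nlinarith
  · subst h
    rw [Real.sign_zero]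
    rcases abs_cases g with ⟨hg, _⟩ | ⟨hg, _⟩ <;> rcases abs_cases (0 - g) with ⟨h2, _⟩ | ⟨h2, _⟩ <;>
      nlinarith
  · rw [Real.sign_of_pos h]
    rcases abs_cases g with ⟨hg, _⟩ | ⟨hg, _⟩ <;> rcases abs_cases (c - g) with ⟨h2, _⟩ | ⟨h2, _⟩ <;>
      nlinarith

lemma abs_sign_le_one (c : ℝ) : |Real.sign c| ≤ 1 := by
  rcases lt_trichotomy c 0 with h | h | h <;>
    simp [Real.sign_of_neg, Real.sign_of_pos, h]

lemma l1_le_sqrt_card {d : ℕ} (x : EuclideanSpace ℝ (Fin d)) :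
    l1Norm x ≤ Real.sqrt d * ‖x‖ := by
  have h2 := sum_mul_sq_le_sq_mul_sq univ (fun _ : Fin d => (1 : ℝ)) (fun i => |x i|)
  simp only [one_mul, one_pow, sum_const, card_univ, Fintype.card_fin, nsmul_eq_mul,
    mul_one, sq_abs] at h2
  have hnorm : ‖x‖ ^ 2 = ∑ i, x i ^ 2 := by
    rw [EuclideanSpace.norm_eq, Real.sq_sqrt (by positivity)]
    simp [Real.norm_eq_abs, sq_abs]
  have hl1 : (0 : ℝ) ≤ l1Norm x := Finset.sum_nonneg fun i _ => abs_nonneg _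
  have : (l1Norm x) ^ 2 ≤ (Real.sqrt d * ‖x‖) ^ 2 := by
    rw [mul_pow, Real.sq_sqrt (Nat.cast_nonneg d), hnorm]
    exact h2
  have hrhs : (0 : ℝ) ≤ Real.sqrt d * ‖x‖ := by positivity
  nlinarith

theorem lion_one_step_descent {d : ℕ} (f : EuclideanSpace ℝ (Fin d) → ℝ) (L : ℝ)
    (hf : Differentiable ℝ f)
    (hL : ∀ x y, ‖gradient f x - gradient f y‖ ≤ L * ‖x - y‖)
    (lam η : ℝ) (hlam : 0 < lam) (hη : 0 < η)
    (θ c : EuclideanSpace ℝ (Fin d)) (hθ : linfNorm θ ≤ 1 / lam) :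
    f (θ - η • (signVec c + lam • θ)) - f θ ≤
        -(η * lam) * ⟪gradient f θ, θ⟫ - η * l1Norm (gradient f θ)
          + 2 * η * l1Norm (c - gradient f θ) + 2 * d * L * η ^ 2 ∧
      f (θ - η • (signVec c + lam • θ)) - f θ ≤
        -(η * lam) * ⟪gradient f θ, θ⟫ - η * l1Norm (gradient f θ)
          + 2 * η * Real.sqrt d * ‖c - gradient f θ‖ + 2 * d * L * η ^ 2 := by
  set g : EuclideanSpace ℝ (Fin d) := gradient f θ with hgdef
  rcases Nat.eq_zero_or_pos d with hd | hd
  · subst hd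
    have hsub : ∀ x : EuclideanSpace ℝ (Fin 0), x = 0 := fun x => Subsingleton.elim x 0
    have hstep : θ - η • (signVec c + lam • θ) = θ := by
      rw [hsub (θ - η • (signVec c + lam • θ)), hsub θ]
    rw [hstep]
    have hθ0 : θ = 0 := hsub θ
    have hcg : c - g = 0 := hsub _
    constructor <;>
      simp [hθ0, hcg, l1Norm, inner_zero_right, Finset.univ_eq_empty] <;> positivity
  -- main case
  · have hL0 : 0 ≤ L := by
      have h := hL 0 (EuclideanSpace.single ⟨0, hd⟩ 1)
      rw [zero_sub, norm_neg, EuclideanSpace.norm_single, norm_one, mul_one] at h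
      exact le_trans (norm_nonneg _) h
    set v : EuclideanSpace ℝ (Fin d) := -(η • (signVec c + lam • θ)) with hv
    have hstep : θ - η • (signVec c + lam • θ) = θ + v := by
      rw [hv, sub_eq_add_neg]
    -- norm bounds
    have hsign : ‖signVec c‖ ≤ Real.sqrt d := by
      rw [EuclideanSpace.norm_eq]
      have hb : ∑ i, ‖signVec c i‖ ^ 2 ≤ (d : ℝ) := by
        calc ∑ i, ‖signVec c i‖ ^ 2 ≤ ∑ _i : Fin d, (1 : ℝ) := by
              apply Finset.sum_le_sum
              intro i _
              rw [signVec_apply, Real.norm_eq_abs]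
              have h1 := abs_sign_le_one (c i)
              nlinarith [abs_nonneg (Real.sign (c i))]
          _ = d := by simp
      exact Real.sqrt_le_sqrt hb
    have hθi : ∀ i, |θ i| ≤ 1 / lam := by
      intro i
      refine le_trans ?_ hθ
      simpa [Real.norm_eq_abs, linfNorm] using norm_le_pi_norm ((EuclideanSpace.equiv (Fin d) ℝ) θ) i
    have hθn : ‖θ‖ ≤ Real.sqrt d * (1 / lam) := by
      rw [EuclideanSpace.norm_eq]
      have hb : ∑ i, ‖θ i‖ ^ 2 ≤ (d : ℝ) * (1 / lam) ^ 2 := by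
        calc ∑ i, ‖θ i‖ ^ 2 ≤ ∑ _i : Fin d, (1 / lam) ^ 2 := by
              apply Finset.sum_le_sum
              intro i _
              rw [Real.norm_eq_abs]
              exact pow_le_pow_left₀ (abs_nonneg _) (hθi i) 2
          _ = (d : ℝ) * (1 / lam) ^ 2 := by simp [mul_comm]
      calc Real.sqrt (∑ i, ‖θ i‖ ^ 2) ≤ Real.sqrt ((d : ℝ) * (1 / lam) ^ 2) :=
            Real.sqrt_le_sqrt hb
        _ = Real.sqrt d * (1 / lam) := by
            rw [Real.sqrt_mul (Nat.cast_nonneg d), Real.sqrt_sq (by positivity)]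
    have hvnorm : ‖v‖ ≤ 2 * η * Real.sqrt d := by
      rw [hv, norm_neg, norm_smul, Real.norm_eq_abs, abs_of_pos hη]
      have h1 : ‖signVec c + lam • θ‖ ≤ ‖signVec c‖ + ‖lam • θ‖ := norm_add_le _ _
      have h2 : ‖lam • θ‖ ≤ Real.sqrt d := by
        rw [norm_smul, Real.norm_eq_abs, abs_of_pos hlam]
        calc lam * ‖θ‖ ≤ lam * (Real.sqrt d * (1 / lam)) := by
              exact mul_le_mul_of_nonneg_left hθn hlam.le
          _ = Real.sqrt d := by field_simp
      nlinarith [hsign, h1, h2]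
    -- descent
    have hdesc := descent_lemma f L hf hL θ v
    rw [hstep]
    -- inner product decomposition
    have hinner : ⟪g, v⟫ = -(η * ⟪g, signVec c⟫ + η * lam * ⟪g, θ⟫) := by
      rw [hv, inner_neg_right, real_inner_smul_right, inner_add_right, real_inner_smul_right]
      ring
    -- sign inequality
    have hsgn : l1Norm g - ⟪g, signVec c⟫ ≤ 2 * l1Norm (c - g) := by
      have hip : ⟪g, signVec c⟫ = ∑ i, g i * Real.sign (c i) := by
        rw [PiLp.inner_apply]
        simp [signVec_apply, RCLike.inner_apply, conj_trivial, mul_comm]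
      have hsum : ∑ i, (|g i| - g i * Real.sign (c i)) ≤ ∑ i, 2 * |c i - g i| :=
        Finset.sum_le_sum fun i _ => sign_pointwise (c i) (g i)
      rw [Finset.sum_sub_distrib, ← Finset.mul_sum] at hsum
      have hcg : l1Norm (c - g) = ∑ i, |c i - g i| := by
        simp [l1Norm, PiLp.sub_apply]
      rw [l1Norm, hip, hcg]
      linarith
    -- quadratic term
    have hquad : L / 2 * ‖v‖ ^ 2 ≤ 2 * d * L * η ^ 2 := by
      have hsq : ‖v‖ ^ 2 ≤ (2 * η * Real.sqrt d) ^ 2 :=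
        pow_le_pow_left₀ (norm_nonneg v) hvnorm 2
      have hd2 : Real.sqrt d ^ 2 = (d : ℝ) := Real.sq_sqrt (Nat.cast_nonneg d)
      have hsq' : ‖v‖ ^ 2 ≤ 4 * d * η ^ 2 := by nlinarith [hsq, hd2]
      calc L / 2 * ‖v‖ ^ 2 ≤ L / 2 * (4 * d * η ^ 2) :=
            mul_le_mul_of_nonneg_left hsq' (by linarith)
        _ = 2 * d * L * η ^ 2 := by ring
    have hfirst : f (θ + v) - f θ ≤
        -(η * lam) * ⟪g, θ⟫ - η * l1Norm g + 2 * η * l1Norm (c - g) + 2 * d * L * η ^ 2 := by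
      rw [← hgdef] at hdesc
      linarith [hdesc, hinner, hquad, mul_le_mul_of_nonneg_left hsgn hη.le]
    refine ⟨hfirst, ?_⟩
    have hcs : l1Norm (c - g) ≤ Real.sqrt d * ‖c - g‖ := l1_le_sqrt_card (c - g)
    have h2 : 2 * η * l1Norm (c - g) ≤ 2 * η * Real.sqrt d * ‖c - g‖ := by
      have := mul_le_mul_of_nonneg_left hcs (by positivity : (0:ℝ) ≤ 2 * η)
      linarith
    linarith [hfirst, h2]
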